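/- Let n ≥ 1. If p* = (p*_1,…,p*_n) ∈ [0,1]^n is a global maximizer of the function p ↦ H(Z_p) on the cube [0,1]^n, then p*_1 = p*_2 = ⋯ = p*_n. Consequently, max over p ∈ [0,1]^n of H(Z_p) equals max over q ∈ [0,1] of H_n(q), the maximum over the diagonal p_1 = ⋯ = p_n = q. -/

import Mathlib

open Finset

/-- `b(k,p)`: the Poisson–binomial probability mass function. -/
noncomputable def pbin (n : ℕ) (p : Fin n → ℝ) (k : ℤ) : ℝ :=
  ∑ A ∈ Finset.univ.powerset.filter (fun A : Finset (Fin n) => (A.card : ℤ) = k),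
    (∏ i ∈ A, p i) * ∏ j ∈ Aᶜ, (1 - p j)

/-- Shannon entropy (base 2) of the Poisson–binomial distribution. -/
noncomputable def pbinEnt (n : ℕ) (p : Fin n → ℝ) : ℝ :=
  -∑ k ∈ Finset.range (n + 1), pbin n p k * Real.logb 2 (pbin n p k)

/-- `H_n(q)`: Shannon entropy of the binomial distribution `B(n,q)`. -/
noncomputable def binomEnt (n : ℕ) (q : ℝ) : ℝ :=
  -∑ k ∈ Finset.range (n + 1),
    ((n.choose k : ℝ) * q ^ k * (1 - q) ^ (n - k)) *
      Real.logb 2 ((n.choose k : ℝ) * q ^ k * (1 - q) ^ (n - k))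


noncomputable def W {n : ℕ} (p : Fin n → ℝ) (s : Finset (Fin n)) (k : ℤ) : ℝ :=
  ∑ A ∈ s.powerset.filter (fun A => (A.card : ℤ) = k),
    (∏ i ∈ A, p i) * ∏ j ∈ s \ A, (1 - p j)

lemma pbin_eq_W (n : ℕ) (p : Fin n → ℝ) (k : ℤ) : pbin n p k = W p univ k := by
  unfold pbin W
  refine Finset.sum_congr rfl fun A _ => ?_
  rw [Finset.compl_eq_univ_sdiff]

lemma W_eq_sum_ite {n : ℕ} (p : Fin n → ℝ) (s : Finset (Fin n)) (k : ℤ) :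
    W p s k = ∑ A ∈ s.powerset, if (A.card : ℤ) = k then (∏ i ∈ A, p i) * ∏ j ∈ s \ A, (1 - p j) else 0 := by
  rw [W, Finset.sum_filter]

lemma W_insert {n : ℕ} (p : Fin n → ℝ) {s : Finset (Fin n)} {i : Fin n} (hi : i ∉ s) (k : ℤ) :
    W p (insert i s) k = (1 - p i) * W p s k + p i * W p s (k - 1) := by
  rw [W_eq_sum_ite, Finset.sum_powerset_insert hi]
  have h1 : ∀ A ∈ s.powerset,
      (if ((A.card : ℤ)) = k then (∏ x ∈ A, p x) * ∏ j ∈ insert i s \ A, (1 - p j) else 0)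
      = (1 - p i) * (if ((A.card : ℤ)) = k then (∏ x ∈ A, p x) * ∏ j ∈ s \ A, (1 - p j) else 0) := by
    intro A hA
    have hAs : A ⊆ s := Finset.mem_powerset.mp hA
    have hiA : i ∉ A := fun h => hi (hAs h)
    have : insert i s \ A = insert i (s \ A) := by
      rw [Finset.insert_sdiff_of_notMem _ hiA]
    rw [this, Finset.prod_insert (fun h => hi (Finset.mem_sdiff.mp h).1)]
    split <;> ring
  have h2 : ∀ A ∈ s.powerset,
      (if (((insert i A).card : ℤ)) = k then (∏ x ∈ insert i A, p x) * ∏ j ∈ insert i s \ insert i A, (1 - p j) else 0)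
      = p i * (if ((A.card : ℤ)) = k - 1 then (∏ x ∈ A, p x) * ∏ j ∈ s \ A, (1 - p j) else 0) := by
    intro A hA
    have hAs : A ⊆ s := Finset.mem_powerset.mp hA
    have hiA : i ∉ A := fun h => hi (hAs h)
    have hd : insert i s \ insert i A = s \ A := by
      ext x
      simp only [Finset.mem_sdiff, Finset.mem_insert]
      constructor
      · rintro ⟨hx | hx, hx2⟩
        · exact absurd (Or.inl hx) hx2
        · exact ⟨hx, fun h => hx2 (Or.inr h)⟩
      · rintro ⟨hx, hx2⟩
        exact ⟨Or.inr hx, by rintro (rfl | h) <;> [exact hi hx; exact hx2 h]⟩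
    have hc : ((insert i A).card : ℤ) = (A.card : ℤ) + 1 := by
      rw [Finset.card_insert_of_notMem hiA]; push_cast; ring
    rw [hd, Finset.prod_insert hiA, hc]
    have : ((A.card : ℤ) + 1 = k) ↔ ((A.card : ℤ) = k - 1) := by omega
    simp only [this]
    split <;> ring
  rw [Finset.sum_congr rfl h1, Finset.sum_congr rfl h2, ← Finset.mul_sum, ← Finset.mul_sum,
    ← W_eq_sum_ite, ← W_eq_sum_ite]

lemma W_congr {n : ℕ} {p p' : Fin n → ℝ} {s : Finset (Fin n)} (h : ∀ l ∈ s, p l = p' l) (k : ℤ) :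
    W p s k = W p' s k := by
  unfold W
  refine Finset.sum_congr rfl fun A hA => ?_
  have hAs : A ⊆ s := Finset.mem_powerset.mp (Finset.mem_filter.mp hA).1
  rw [Finset.prod_congr rfl (fun x hx => h x (hAs hx)),
    Finset.prod_congr (rfl : s \ A = s \ A) (fun x hx => by rw [h x (Finset.mem_sdiff.mp hx).1])]

lemma W_nonneg {n : ℕ} {p : Fin n → ℝ} (hp : ∀ l, p l ∈ Set.Icc (0:ℝ) 1) (s : Finset (Fin n)) (k : ℤ) :
    0 ≤ W p s k := by
  unfold W
  refine Finset.sum_nonneg fun A _ => mul_nonneg (Finset.prod_nonneg fun x _ => (hp x).1)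
    (Finset.prod_nonneg fun x _ => by linarith [(hp x).2])

lemma W_zero_of_neg {n : ℕ} (p : Fin n → ℝ) (s : Finset (Fin n)) {k : ℤ} (hk : k < 0) :
    W p s k = 0 := by
  unfold W
  rw [Finset.filter_false_of_mem, Finset.sum_empty]
  intro A _
  omega

lemma W_zero_of_gt {n : ℕ} (p : Fin n → ℝ) (s : Finset (Fin n)) {k : ℤ} (hk : (s.card : ℤ) < k) :
    W p s k = 0 := by
  unfold W
  rw [Finset.filter_false_of_mem, Finset.sum_empty]
  intro A hA
  have := Finset.card_le_card (Finset.mem_powerset.mp hA)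
  omega

lemma W_sum {n : ℕ} (p : Fin n → ℝ) (s : Finset (Fin n)) :
    ∑ k ∈ Finset.range (s.card + 1), W p s (k : ℤ) = 1 := by
  have h := Finset.prod_add p (fun i => 1 - p i) s
  have hL : ∏ i ∈ s, (p i + (1 - p i)) = 1 := by
    rw [Finset.prod_congr rfl (fun x _ => by ring : ∀ x ∈ s, p x + (1 - p x) = 1), Finset.prod_const_one]
  rw [hL] at h
  have h2 : ∑ k ∈ Finset.range (s.card + 1), W p s (k : ℤ)
      = ∑ A ∈ s.powerset, (∏ i ∈ A, p i) * ∏ j ∈ s \ A, (1 - p j) := by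
    rw [← Finset.sum_fiberwise_of_maps_to (g := fun A : Finset (Fin n) => A.card)
      (t := Finset.range (s.card + 1)) (fun A hA => Finset.mem_range.mpr
        (Nat.lt_succ_of_le (Finset.card_le_card (Finset.mem_powerset.mp hA))))]
    refine Finset.sum_congr rfl fun k _ => ?_
    unfold W
    refine Finset.sum_congr ?_ fun _ _ => rfl
    ext A
    simp [Nat.cast_inj]
  rw [h2, ← h]

def LCseq (c : ℤ → ℝ) : Prop :=
  (∀ k, 0 ≤ c k) ∧ ∀ a b : ℤ, a ≤ b → c (a - 1) * c (b + 1) ≤ c a * c b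

lemma lc_cross {c : ℤ → ℝ} (hc : LCseq c) {a b : ℤ} (hab : a ≤ b) :
    c (a - 2) * c (b + 1) ≤ c a * c (b - 1) := by
  have h1 : c (a - 2) * c (b + 1) ≤ c (a - 1) * c b := by
    have h := hc.2 (a - 1) b (by omega)
    have e : a - 1 - 1 = a - 2 := by ring
    rwa [e] at h
  rcases eq_or_lt_of_le hab with rfl | h
  · calc c (a-2) * c (a+1) ≤ c (a-1) * c a := h1
      _ = c a * c (a-1) := by ring
  · have h2 : c (a - 1) * c b ≤ c a * c (b - 1) := by
      have := hc.2 a (b - 1) (by omega)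
      simpa using this
    linarith

lemma lc_step {c : ℤ → ℝ} (hc : LCseq c) {x : ℝ} (hx0 : 0 ≤ x) (hx1 : x ≤ 1) :
    LCseq (fun k => (1 - x) * c k + x * c (k - 1)) := by
  constructor
  · intro k
    have h1 := hc.1 k; have h2 := hc.1 (k - 1)
    simp only
    nlinarith
  · intro a b hab
    simp only
    have h1 : c (a - 1) * c (b + 1) ≤ c a * c b := hc.2 a b hab
    have h2 : c (a - 1 - 1) * c (b - 1 + 1) ≤ c (a - 1) * c (b - 1) := hc.2 (a - 1) (b - 1) (by omega)
    have h2' : c (a - 2) * c b ≤ c (a - 1) * c (b - 1) := by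
      have e1 : a - 1 - 1 = a - 2 := by ring
      have e2 : b - 1 + 1 = b := by ring
      rwa [e1, e2] at h2
    have h3 : c (a - 2) * c (b + 1) ≤ c a * c (b - 1) := lc_cross hc hab
    have e3 : b + 1 - 1 = b := by ring
    have e4 : a - 1 - 1 = a - 2 := by ring
    rw [e3, e4]
    have k1 := mul_le_mul_of_nonneg_left h1 (sq_nonneg (1 - x))
    have k2 := mul_le_mul_of_nonneg_left h2' (sq_nonneg x)
    have k3 := mul_le_mul_of_nonneg_left h3 (mul_nonneg hx0 (sub_nonneg.mpr hx1))
    nlinarith [k1, k2, k3]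
lemma lc_delta : LCseq (fun k : ℤ => if k = 0 then (1:ℝ) else 0) := by
  constructor
  · intro k; dsimp only; split <;> norm_num
  · intro a b hab
    dsimp only
    by_cases h1 : a - 1 = 0
    · have : ¬ (b + 1 = 0) := by omega
      simp [this]
      positivity
    · simp [h1]
      positivity

lemma lc_W {n : ℕ} {p : Fin n → ℝ} (hp : ∀ l, p l ∈ Set.Icc (0:ℝ) 1) (s : Finset (Fin n)) :
    LCseq (W p s) := by
  classical
  induction s using Finset.induction_on with
  | empty =>
    have h : W p (∅ : Finset (Fin n)) = fun k : ℤ => if k = 0 then (1:ℝ) else 0 := by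
      funext k
      unfold W
      simp only [Finset.powerset_empty]
      by_cases hk : k = 0
      · subst hk
        rw [Finset.filter_true_of_mem, Finset.sum_singleton]
        · simp
        · intro A hA
          simp only [Finset.mem_singleton] at hA
          subst hA
          simp
      · rw [Finset.filter_false_of_mem, Finset.sum_empty]
        · simp [hk]
        · intro A hA
          simp only [Finset.mem_singleton] at hA
          subst hA
          simpa using fun h => hk h.symm
    rw [h]; exact lc_delta
  | @insert i s hi ih =>
    have h : W p (insert i s) = fun k : ℤ => (1 - p i) * W p s k + p i * W p s (k - 1) := by
      funext k; exact W_insert p hi k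
    rw [h]
    exact lc_step ih (hp i).1 (hp i).2


lemma sum_shift (c M : ℤ → ℝ) (N : ℕ) (h0 : c (-1) = 0) (hN : c (N : ℤ) = 0) :
    ∑ k ∈ Finset.range (N+1), c ((k:ℤ)-1) * M k = ∑ k ∈ Finset.range (N+1), c (k:ℤ) * M ((k:ℤ)+1) := by
  rw [Finset.sum_range_succ' (fun k => c ((k:ℤ)-1) * M (k:ℤ)) N, Finset.sum_range_succ]
  simp only [Nat.cast_add, Nat.cast_one, Nat.cast_zero, add_sub_cancel_right, hN, h0,
    zero_sub, zero_mul, mul_zero, add_zero]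


noncomputable def qq (c : ℤ → ℝ) (s t : ℝ) (k : ℤ) : ℝ :=
  (1 - s + t) * c k + (s - 2*t) * c (k - 1) + t * c (k - 2)

noncomputable def gent (n : ℕ) (c : ℤ → ℝ) (s t : ℝ) : ℝ :=
  -∑ k ∈ Finset.range (n+1), qq c s t k * Real.logb 2 (qq c s t k)

lemma gent_cont (n : ℕ) (c : ℤ → ℝ) (s : ℝ) : Continuous (gent n c s) := by
  unfold gent
  refine Continuous.neg (continuous_finset_sum _ fun k _ => ?_)
  have hrw : (fun t => qq c s t k * Real.logb 2 (qq c s t k))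
      = fun t => (qq c s t k * Real.log (qq c s t k)) * (Real.log 2)⁻¹ := by
    funext t
    rw [Real.logb, div_eq_mul_inv]
    ring
  rw [hrw]
  have haff : Continuous (fun t => qq c s t k) := by
    unfold qq; continuity
  exact (Real.continuous_mul_log.comp haff).mul continuous_const

set_option maxHeartbeats 1000000 in
lemma gent_strictMono (n : ℕ) (c : ℤ → ℝ) (s t0 : ℝ)
    (hlc : LCseq c)
    (hex : ∃ k : ℕ, c k ≠ 0)
    (hneg : ∀ k : ℤ, k < 0 → c k = 0)
    (htop : ∀ k : ℤ, (n:ℤ) - 2 < k → c k = 0)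
    (hs0 : 0 < s) (hs2 : s < 2)
    (ht00 : 0 ≤ t0) (ht0s : s - 1 ≤ t0) (ht0T : t0 < s^2/4) :
    StrictMonoOn (gent n c s) (Set.Icc t0 (s^2/4)) := by
  have hlog2 : (0:ℝ) < Real.log 2 := Real.log_pos one_lt_two
  refine strictMonoOn_of_deriv_pos (convex_Icc _ _) (gent_cont n c s).continuousOn ?_
  rw [interior_Icc]
  intro t ht
  obtain ⟨htl, htr⟩ := ht
  -- positivity of the coefficients
  have ha : 0 < 1 - s + t := by nlinarith
  have hb : 0 < s - 2*t := by nlinarith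
  have htpos : 0 < t := lt_of_le_of_lt ht00 htl
  -- log-concavity of `qq c s t`
  have hlcq : LCseq (qq c s t) := by
    set u := Real.sqrt (s^2/4 - t) with hu
    have hu0 : 0 ≤ u := Real.sqrt_nonneg _
    have hu2 : u^2 = s^2/4 - t := Real.sq_sqrt (by nlinarith)
    set x := s/2 + u with hx
    set y := s/2 - u with hy
    have hxys : x + y = s := by rw [hx, hy]; ring
    have hxyt : x * y = t := by rw [hx, hy]; nlinarith [hu2]
    have hy0 : 0 < y := by nlinarith
    have hx1 : x < 1 := by nlinarith
    have hx0 : 0 < x := by nlinarith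
    have hy1 : y < 1 := by nlinarith
    have hq : qq c s t = fun k => (1 - y) * ((fun m => (1 - x) * c m + x * c (m - 1)) k)
        + y * ((fun m => (1 - x) * c m + x * c (m - 1)) (k - 1)) := by
      funext k
      simp only [qq]
      have e : k - 1 - 1 = k - 2 := by ring
      rw [e, ← hxys, ← hxyt]
      ring
    rw [hq]
    exact lc_step (lc_step hlc (le_of_lt hx0) (le_of_lt hx1)) (le_of_lt hy0) (le_of_lt hy1)
  have hqnonneg : ∀ m : ℤ, 0 ≤ qq c s t m := hlcq.1
  -- derivative of gent at t
  set β : ℤ → ℝ := fun k => c k - 2 * c (k - 1) + c (k - 2) with hβ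
  have hderivk : ∀ k : ℕ, HasDerivAt (fun t' => qq c s t' k * Real.logb 2 (qq c s t' k))
      (β k * (Real.logb 2 (qq c s t k) + (Real.log 2)⁻¹)) t := by
    intro k
    by_cases hv : qq c s t k = 0
    · -- all relevant c's vanish
      have hc1 : c k = 0 ∧ c ((k:ℤ) - 1) = 0 ∧ c ((k:ℤ) - 2) = 0 := by
        have h1 := hlc.1 (k:ℤ); have h2 := hlc.1 ((k:ℤ)-1); have h3 := hlc.1 ((k:ℤ)-2)
        unfold qq at hv
        have t1 : 0 ≤ (1 - s + t) * c k := mul_nonneg ha.le h1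
        have t2 : 0 ≤ (s - 2*t) * c ((k:ℤ)-1) := mul_nonneg hb.le h2
        have t3 : 0 ≤ t * c ((k:ℤ)-2) := mul_nonneg htpos.le h3
        have e1 : (1 - s + t) * c k = 0 := by linarith
        have e2 : (s - 2*t) * c ((k:ℤ)-1) = 0 := by linarith
        have e3 : t * c ((k:ℤ)-2) = 0 := by linarith
        exact ⟨by rcases mul_eq_zero.mp e1 with h | h; exacts [absurd h (ne_of_gt ha), h],
          by rcases mul_eq_zero.mp e2 with h | h; exacts [absurd h (ne_of_gt hb), h],
          by rcases mul_eq_zero.mp e3 with h | h; exacts [absurd h (ne_of_gt htpos), h]⟩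
      have hzf : (fun t' => qq c s t' k * Real.logb 2 (qq c s t' k)) = fun _ => (0:ℝ) := by
        funext t'
        have : qq c s t' k = 0 := by unfold qq; rw [hc1.1, hc1.2.1, hc1.2.2]; ring
        rw [this]; simp
      have hβ0 : β k = 0 := by rw [hβ]; simp only; rw [hc1.1, hc1.2.1, hc1.2.2]; ring
      rw [hzf, hβ0, zero_mul]
      exact hasDerivAt_const t 0
    · have hvpos : 0 < qq c s t k := lt_of_le_of_ne (hqnonneg k) (Ne.symm hv)
      have haff : HasDerivAt (fun t' => qq c s t' k) (β k) t := by
        have hfe : (fun t' => qq c s t' k)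
            = fun t' => β k * t' + ((1 - s) * c k + s * c ((k:ℤ) - 1)) := by
          funext t'; unfold qq; rw [hβ]; ring
        rw [hfe]
        simpa using ((hasDerivAt_id t).const_mul (β k)).add_const ((1 - s) * c k + s * c ((k:ℤ) - 1))
      have hml := Real.hasDerivAt_mul_log hv
      have hcomp := HasDerivAt.comp t hml haff
      have hfin := hcomp.mul_const (Real.log 2)⁻¹
      have hrw : (fun t' => qq c s t' k * Real.logb 2 (qq c s t' k))
          = fun t' => ((fun v => v * Real.log v) (qq c s t' k)) * (Real.log 2)⁻¹ := by
        funext t'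
        rw [Real.logb, div_eq_mul_inv]
        ring
      rw [hrw]
      refine hfin.congr_deriv ?_
      rw [Real.logb, div_eq_mul_inv]
      ring
  have hg : HasDerivAt (gent n c s)
      (-∑ k ∈ Finset.range (n+1), β k * (Real.logb 2 (qq c s t k) + (Real.log 2)⁻¹)) t := by
    exact (HasDerivAt.fun_sum (fun k _ => hderivk k)).neg
  -- rewrite the derivative
  set L : ℤ → ℝ := fun m => Real.logb 2 (qq c s t m) + (Real.log 2)⁻¹ with hL
  have hc1 : c (-1) = 0 := hneg _ (by norm_num)
  have hc2 : c (-2) = 0 := hneg _ (by norm_num)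
  have hcn : c (n:ℤ) = 0 := htop _ (by omega)
  have hcn1 : c ((n:ℤ) - 1) = 0 := htop _ (by omega)
  have hshift1 : ∑ k ∈ Finset.range (n+1), c ((k:ℤ)-1) * L k
      = ∑ k ∈ Finset.range (n+1), c (k:ℤ) * L ((k:ℤ)+1) := sum_shift c L n hc1 hcn
  have hshift2 : ∑ k ∈ Finset.range (n+1), c ((k:ℤ)-2) * L k
      = ∑ k ∈ Finset.range (n+1), c (k:ℤ) * L ((k:ℤ)+2) := by
    have step1 : ∑ k ∈ Finset.range (n+1), (fun m => c (m - 1)) ((k:ℤ)-1) * L k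
        = ∑ k ∈ Finset.range (n+1), (fun m => c (m - 1)) (k:ℤ) * L ((k:ℤ)+1) := by
      refine sum_shift (fun m => c (m - 1)) L n ?_ ?_
      · simpa using hc2
      · simpa using hcn1
    have step2 : ∑ k ∈ Finset.range (n+1), c ((k:ℤ)-1) * (fun m => L (m + 1)) k
        = ∑ k ∈ Finset.range (n+1), c (k:ℤ) * (fun m => L (m + 1)) ((k:ℤ)+1) := by
      exact sum_shift c (fun m => L (m + 1)) n hc1 hcn
    simp only at step1 step2
    calc ∑ k ∈ Finset.range (n+1), c ((k:ℤ)-2) * L k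
        = ∑ k ∈ Finset.range (n+1), c ((k:ℤ)-1-1) * L k := by
          refine Finset.sum_congr rfl fun k _ => ?_
          have e : (k:ℤ)-1-1 = (k:ℤ)-2 := by ring
          rw [e]
      _ = ∑ k ∈ Finset.range (n+1), c ((k:ℤ)-1) * L ((k:ℤ)+1) := step1
      _ = ∑ k ∈ Finset.range (n+1), c (k:ℤ) * L ((k:ℤ)+1+1) := step2
      _ = ∑ k ∈ Finset.range (n+1), c (k:ℤ) * L ((k:ℤ)+2) := by
          refine Finset.sum_congr rfl fun k _ => ?_
          have e : (k:ℤ)+1+1 = (k:ℤ)+2 := by ring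
          rw [e]
  have hDval : -∑ k ∈ Finset.range (n+1), β k * L k
      = ∑ k ∈ Finset.range (n+1), c (k:ℤ) * (2 * Real.logb 2 (qq c s t ((k:ℤ)+1))
          - Real.logb 2 (qq c s t k) - Real.logb 2 (qq c s t ((k:ℤ)+2))) := by
    have expand : ∀ k ∈ Finset.range (n+1), β (k:ℤ) * L k
        = c (k:ℤ) * L k - 2 * (c ((k:ℤ)-1) * L k) + c ((k:ℤ)-2) * L k := by
      intro k _; rw [hβ]; ring
    rw [Finset.sum_congr rfl expand]
    rw [Finset.sum_add_distrib, Finset.sum_sub_distrib, ← Finset.mul_sum, hshift1, hshift2]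
    have hterm : ∀ k ∈ Finset.range (n+1), c (k:ℤ) * (2 * Real.logb 2 (qq c s t ((k:ℤ)+1))
          - Real.logb 2 (qq c s t k) - Real.logb 2 (qq c s t ((k:ℤ)+2)))
        = 2 * (c (k:ℤ) * L ((k:ℤ)+1)) - c (k:ℤ) * L k - c (k:ℤ) * L ((k:ℤ)+2) := by
      intro k _
      simp only [hL]
      ring
    rw [Finset.sum_congr rfl hterm, Finset.sum_sub_distrib, Finset.sum_sub_distrib,
      ← Finset.mul_sum]
    ring
  rw [hg.deriv, hDval]
  classical
  set k0 := Nat.find hex with hk0def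
  have hck0 : c (k0:ℤ) ≠ 0 := Nat.find_spec hex
  have hck0pos : 0 < c (k0:ℤ) := lt_of_le_of_ne (hlc.1 _) (Ne.symm hck0)
  have hk0min : ∀ z : ℤ, z < (k0:ℤ) → c z = 0 := by
    intro z hz
    by_cases hzneg : z < 0
    · exact hneg z hzneg
    · have h0z : 0 ≤ z := not_lt.mp hzneg
      obtain ⟨m, rfl⟩ := Int.eq_ofNat_of_zero_le h0z
      have hm : m < k0 := by exact_mod_cast hz
      exact not_not.mp (Nat.find_min hex hm)
  have hk0le : (k0:ℤ) ≤ (n:ℤ) - 2 := by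
    by_contra h
    push_neg at h
    exact hck0 (htop _ h)
  have hk0n : k0 < n + 1 := by omega
  have hqpos : ∀ m : ℤ, 0 < c m →
      0 < qq c s t m ∧ 0 < qq c s t (m+1) ∧ 0 < qq c s t (m+2) := by
    intro m hm
    have n1 := hlc.1 (m-1); have n2 := hlc.1 (m-2)
    have np1 := hlc.1 (m+1); have np2 := hlc.1 (m+2)
    have e1 : m+1-1 = m := by ring
    have e2 : m+1-2 = m-1 := by ring
    have e3 : m+2-1 = m+1 := by ring
    have e4 : m+2-2 = m := by ring
    refine ⟨?_, ?_, ?_⟩ <;> unfold qq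
    · nlinarith [mul_nonneg hb.le n1, mul_nonneg htpos.le n2, mul_pos ha hm]
    · rw [e1, e2]
      nlinarith [mul_nonneg ha.le np1, mul_nonneg htpos.le n1, mul_pos hb hm]
    · rw [e3, e4]
      nlinarith [mul_nonneg ha.le np2, mul_nonneg hb.le np1, mul_pos htpos hm]
  apply Finset.sum_pos'
  · intro k _
    by_cases hck : c (k:ℤ) = 0
    · rw [hck, zero_mul]
    · have hckpos : 0 < c (k:ℤ) := lt_of_le_of_ne (hlc.1 _) (Ne.symm hck)
      obtain ⟨hq0, hq1, hq2⟩ := hqpos k hckpos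
      have hlcqq : qq c s t k * qq c s t ((k:ℤ)+2) ≤ qq c s t ((k:ℤ)+1) * qq c s t ((k:ℤ)+1) := by
        have h := hlcq.2 ((k:ℤ)+1) ((k:ℤ)+1) le_rfl
        have e1 : (k:ℤ)+1-1 = (k:ℤ) := by ring
        have e2 : (k:ℤ)+1+1 = (k:ℤ)+2 := by ring
        rwa [e1, e2] at h
      have h1 : Real.logb 2 (qq c s t k * qq c s t ((k:ℤ)+2))
          ≤ Real.logb 2 (qq c s t ((k:ℤ)+1) * qq c s t ((k:ℤ)+1)) :=
        Real.logb_le_logb_of_le one_lt_two (mul_pos hq0 hq2) hlcqq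
      rw [Real.logb_mul (ne_of_gt hq0) (ne_of_gt hq2),
        Real.logb_mul (ne_of_gt hq1) (ne_of_gt hq1)] at h1
      exact mul_nonneg hckpos.le (by linarith)
  · refine ⟨k0, Finset.mem_range.mpr hk0n, ?_⟩
    have hc1z : c ((k0:ℤ)-1) = 0 := hk0min _ (by omega)
    have hc2z : c ((k0:ℤ)-2) = 0 := hk0min _ (by omega)
    have hNewton : c (k0:ℤ) * c ((k0:ℤ)+2) ≤ c ((k0:ℤ)+1) * c ((k0:ℤ)+1) := by
      have h := hlc.2 ((k0:ℤ)+1) ((k0:ℤ)+1) le_rfl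
      have e1 : (k0:ℤ)+1-1 = (k0:ℤ) := by ring
      have e2 : (k0:ℤ)+1+1 = (k0:ℤ)+2 := by ring
      rwa [e1, e2] at h
    obtain ⟨hq0, hq1, hq2⟩ := hqpos k0 hck0pos
    have hstrict : qq c s t k0 * qq c s t ((k0:ℤ)+2) < qq c s t ((k0:ℤ)+1) * qq c s t ((k0:ℤ)+1) := by
      have e1 : (k0:ℤ)+1-1 = (k0:ℤ) := by ring
      have e2 : (k0:ℤ)+1-2 = (k0:ℤ)-1 := by ring
      have e3 : (k0:ℤ)+2-1 = (k0:ℤ)+1 := by ring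
      have e4 : (k0:ℤ)+2-2 = (k0:ℤ) := by ring
      unfold qq
      rw [e1, e2, e3, e4, hc1z, hc2z]
      have hs4 : 0 < s^2 - 4*t := by nlinarith
      have hcp1 := hlc.1 ((k0:ℤ)+1)
      have hcp2 := hlc.1 ((k0:ℤ)+2)
      nlinarith [mul_le_mul_of_nonneg_left hNewton (mul_nonneg ha.le ha.le),
        mul_pos (mul_pos ha htpos) (mul_pos hck0pos hck0pos),
        mul_pos (mul_pos hs4 hck0pos) hck0pos,
        mul_nonneg (mul_nonneg (mul_nonneg ha.le hb.le) hck0pos.le) hcp1]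
    have h1 : Real.logb 2 (qq c s t k0 * qq c s t ((k0:ℤ)+2))
        < Real.logb 2 (qq c s t ((k0:ℤ)+1) * qq c s t ((k0:ℤ)+1)) :=
      Real.logb_lt_logb one_lt_two (mul_pos hq0 hq2) hstrict
    rw [Real.logb_mul (ne_of_gt hq0) (ne_of_gt hq2),
      Real.logb_mul (ne_of_gt hq1) (ne_of_gt hq1)] at h1
    exact mul_pos hck0pos (by linarith)

lemma pbin_update {n : ℕ} (pstar : Fin n → ℝ) {i j : Fin n} (hij : i ≠ j) (x y : ℝ) (k : ℤ) :
    pbin n (Function.update (Function.update pstar i x) j y) k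
      = (1-x)*(1-y) * W pstar (Finset.univ \ {i,j}) k
        + (x*(1-y) + y*(1-x)) * W pstar (Finset.univ \ {i,j}) (k-1)
        + x*y * W pstar (Finset.univ \ {i,j}) (k-2) := by
  classical
  set s0 : Finset (Fin n) := Finset.univ \ {i, j} with hs0
  set p' := Function.update (Function.update pstar i x) j y with hp'
  have hjs0 : j ∉ s0 := by simp [hs0]
  have his0 : i ∉ insert j s0 := by simp [hs0, hij]
  have huniv : (Finset.univ : Finset (Fin n)) = insert i (insert j s0) := by
    ext l
    simp only [Finset.mem_univ, Finset.mem_insert, Finset.mem_sdiff, Finset.mem_singleton,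
      true_iff, hs0, Finset.mem_univ, true_and, Finset.mem_insert, Finset.mem_singleton]
    by_cases h1 : l = i
    · tauto
    · by_cases h2 : l = j <;> tauto
  have hpi : p' i = x := by
    rw [hp', Function.update_of_ne hij, Function.update_self]
  have hpj : p' j = y := by rw [hp', Function.update_self]
  have hW0 : ∀ m : ℤ, W p' s0 m = W pstar s0 m := by
    intro m
    refine W_congr (fun l hl => ?_) m
    have : l ≠ i ∧ l ≠ j := by
      simp only [hs0, Finset.mem_sdiff, Finset.mem_insert, Finset.mem_singleton] at hl
      tauto
    rw [hp', Function.update_of_ne this.2, Function.update_of_ne this.1]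
  have e2 : k - 1 - 1 = k - 2 := by ring
  rw [pbin_eq_W, huniv, W_insert p' his0, W_insert p' hjs0, W_insert p' hjs0, e2,
    hpi, hpj]
  simp only [hW0]
  ring

lemma pbin_const (n : ℕ) (q : ℝ) (k : ℕ) :
    pbin n (fun _ => q) (k:ℤ) = (n.choose k : ℝ) * q ^ k * (1-q) ^ (n - k) := by
  unfold pbin
  have hfilter : (Finset.univ.powerset.filter (fun A : Finset (Fin n) => (A.card:ℤ) = (k:ℤ)))
      = Finset.powersetCard k (Finset.univ : Finset (Fin n)) := by
    ext A
    simp only [Finset.mem_filter, Finset.mem_powerset, Finset.mem_powersetCard, Nat.cast_inj]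
  rw [hfilter]
  have hterm : ∀ A ∈ Finset.powersetCard k (Finset.univ : Finset (Fin n)),
      (∏ _i ∈ A, q) * ∏ _j ∈ Aᶜ, (1-q) = q^k * (1-q)^(n-k) := by
    intro A hA
    have hcard : A.card = k := (Finset.mem_powersetCard.mp hA).2
    rw [Finset.prod_const, Finset.prod_const, hcard, Finset.card_compl, hcard]
    simp [Fintype.card_fin]
  rw [Finset.sum_congr rfl hterm, Finset.sum_const, Finset.card_powersetCard, Finset.card_univ,
    Fintype.card_fin, nsmul_eq_mul]
  ring

lemma pbinEnt_const (n : ℕ) (q : ℝ) : pbinEnt n (fun _ => q) = binomEnt n q := by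
  unfold pbinEnt binomEnt
  congr 1
  refine Finset.sum_congr rfl fun k _ => ?_
  rw [pbin_const]

lemma pbinEnt_update {n : ℕ} (pstar : Fin n → ℝ) {i j : Fin n} (hij : i ≠ j) (x y : ℝ) :
    pbinEnt n (Function.update (Function.update pstar i x) j y)
      = gent n (W pstar (Finset.univ \ {i,j})) (x + y) (x * y) := by
  unfold pbinEnt gent
  congr 1
  refine Finset.sum_congr rfl fun k _ => ?_
  have hq : pbin n (Function.update (Function.update pstar i x) j y) (k:ℤ)
      = qq (W pstar (Finset.univ \ {i,j})) (x + y) (x * y) (k:ℤ) := by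
    rw [pbin_update pstar hij x y (k:ℤ)]
    unfold qq
    ring
  rw [hq]

lemma coords_eq (n : ℕ) (pstar : Fin n → ℝ)
    (hps : ∀ i, pstar i ∈ Set.Icc (0 : ℝ) 1)
    (hmax : ∀ p : Fin n → ℝ, (∀ i, p i ∈ Set.Icc (0 : ℝ) 1) →
      pbinEnt n p ≤ pbinEnt n pstar)
    (i j : Fin n) (hij : i ≠ j) : pstar i = pstar j := by
  by_contra hne
  classical
  set s0 : Finset (Fin n) := Finset.univ \ {i, j} with hs0def
  set c : ℤ → ℝ := W pstar s0 with hcdef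
  obtain ⟨hpi0, hpi1⟩ := hps i
  obtain ⟨hpj0, hpj1⟩ := hps j
  set s : ℝ := pstar i + pstar j with hsdef
  set t0 : ℝ := pstar i * pstar j with ht0def
  -- cardinality facts
  have hijcard : ({i, j} : Finset (Fin n)).card = 2 := by
    rw [Finset.card_insert_of_notMem (by simpa using hij), Finset.card_singleton]
  have hcard : s0.card = n - 2 := by
    rw [hs0def, Finset.card_sdiff_of_subset (Finset.subset_univ _), Finset.card_univ, Fintype.card_fin,
      hijcard]
  have h2n : 2 ≤ n := by
    have := Finset.card_le_card (Finset.subset_univ ({i, j} : Finset (Fin n)))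
    rw [hijcard, Finset.card_univ, Fintype.card_fin] at this
    exact this
  -- hypotheses for gent_strictMono
  have hlc : LCseq c := lc_W hps s0
  have hneg : ∀ k : ℤ, k < 0 → c k = 0 := fun k hk => W_zero_of_neg pstar s0 hk
  have htop : ∀ k : ℤ, (n:ℤ) - 2 < k → c k = 0 := by
    intro k hk
    refine W_zero_of_gt pstar s0 ?_
    rw [hcard]
    omega
  have hex : ∃ k : ℕ, c k ≠ 0 := by
    by_contra h
    push_neg at h
    have := W_sum pstar s0
    rw [Finset.sum_congr rfl (fun k _ => h k)] at this
    simp at this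
  have hs0' : 0 < s := by
    rcases lt_or_eq_of_le (add_nonneg hpi0 hpj0) with h | h
    · exact h
    · exfalso; apply hne; nlinarith
  have hs2 : s < 2 := by
    rcases lt_or_eq_of_le (add_le_add hpi1 hpj1) with h | h
    · rw [hsdef]; linarith
    · exfalso; apply hne; nlinarith
  have ht00 : 0 ≤ t0 := mul_nonneg hpi0 hpj0
  have ht0s : s - 1 ≤ t0 := by nlinarith
  have ht0T : t0 < s^2/4 := by
    have h := sub_ne_zero.mpr hne
    have h2 : 0 < (pstar i - pstar j)^2 := by positivity
    rw [ht0def, hsdef]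
    nlinarith
  have hmono := gent_strictMono n c s t0 hlc hex hneg htop hs0' hs2 ht00 ht0s ht0T
  -- pbinEnt pstar = gent at t0
  have hstar : pbinEnt n pstar = gent n c s t0 := by
    have h := pbinEnt_update pstar hij (pstar i) (pstar j)
    rw [Function.update_eq_self, Function.update_eq_self] at h
    rw [h]
  -- entropy at midpoint
  have hmid : pbinEnt n (Function.update (Function.update pstar i (s/2)) j (s/2))
      = gent n c s (s^2/4) := by
    have h := pbinEnt_update pstar hij (s/2) (s/2)
    have e1 : s/2 + s/2 = s := by ring
    have e2 : s/2 * (s/2) = s^2/4 := by ring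
    rw [e1, e2] at h
    exact h
  have hmem : ∀ l, (Function.update (Function.update pstar i (s/2)) j (s/2)) l ∈ Set.Icc (0:ℝ) 1 := by
    intro l
    by_cases hlj : l = j
    · subst hlj
      rw [Function.update_self]
      constructor <;> [positivity; linarith]
    · rw [Function.update_of_ne hlj]
      by_cases hli : l = i
      · subst hli
        rw [Function.update_self]
        constructor <;> [positivity; linarith]
      · rw [Function.update_of_ne hli]
        exact hps l
  have hle := hmax _ hmem
  rw [hmid, hstar] at hle
  have hlt := hmono (Set.mem_Icc.mpr ⟨le_refl t0, le_of_lt ht0T⟩)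
    (Set.mem_Icc.mpr ⟨le_of_lt ht0T, le_refl _⟩) ht0T
  linarith

/-- Any global maximizer of the entropy `H(Z_p)` on the cube `[0,1]^n` has all
coordinates equal; consequently the maximum of `H(Z_p)` over the cube equals
the maximum of `H_n(q)` over the diagonal `p₁ = ⋯ = pₙ = q`. -/
theorem maximizer_has_equal_coords (n : ℕ) (hn : 1 ≤ n) (pstar : Fin n → ℝ)
    (hps : ∀ i, pstar i ∈ Set.Icc (0 : ℝ) 1)
    (hmax : ∀ p : Fin n → ℝ, (∀ i, p i ∈ Set.Icc (0 : ℝ) 1) →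
      pbinEnt n p ≤ pbinEnt n pstar) :
    (∀ i j, pstar i = pstar j) ∧
      (∀ q ∈ Set.Icc (0 : ℝ) 1, binomEnt n q ≤ pbinEnt n pstar) ∧
      pbinEnt n pstar = binomEnt n (pstar ⟨0, hn⟩) := by
  have h1 : ∀ i j, pstar i = pstar j := by
    intro i j
    by_cases h : i = j
    · rw [h]
    · exact coords_eq n pstar hps hmax i j h
  refine ⟨h1, ?_, ?_⟩
  · intro q hq
    rw [← pbinEnt_const]
    exact hmax (fun _ => q) (fun _ => hq)
  · have hfun : pstar = fun _ => pstar ⟨0, hn⟩ := funext fun i => h1 i ⟨0, hn⟩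
    rw [hfun, pbinEnt_const]
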